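/- In the graded ring ℤ[X,Y]/⟨X³, Y⁴ + 2XY³⟩, if (αX + βY)³ = 0 for integers α, β, then β = 0. -/

import Mathlib

open MvPolynomial

noncomputable def RB' : Type :=
  MvPolynomial (Fin 2) ℤ ⧸
    Ideal.span ({(X 0) ^ 3, (X 1) ^ 4 + 2 * X 0 * (X 1) ^ 3} :
      Set (MvPolynomial (Fin 2) ℤ))

noncomputable instance : CommRing RB' := Ideal.Quotient.commRing _

theorem stmt_5 (α β : ℤ)
    (h : (Ideal.Quotient.mk _ (C α * X 0 + C β * X 1) : RB') ^ 3 = 0) :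
    β = 0 := by
  classical
  set I : Ideal (MvPolynomial (Fin 2) ℤ) :=
    Ideal.span ({(X 0) ^ 3, (X 1) ^ 4 + 2 * X 0 * (X 1) ^ 3} :
      Set (MvPolynomial (Fin 2) ℤ)) with hI
  set J : Ideal (Polynomial ℤ) := Ideal.span {Polynomial.X ^ 4} with hJ
  let φ : MvPolynomial (Fin 2) ℤ →+* Polynomial ℤ :=
    (aeval (R := ℤ) ![0, Polynomial.X]).toRingHom
  have hφ0 : φ (X 0) = 0 := by simp [φ]
  have hφ1 : φ (X 1) = Polynomial.X := by simp [φ]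
  have hgen : ∀ a ∈ I, (Ideal.Quotient.mk J).comp φ a = 0 := by
    intro a ha
    have : I ≤ RingHom.ker ((Ideal.Quotient.mk J).comp φ) := by
      rw [hI, Ideal.span_le]
      rintro p (rfl | rfl)
      · simp [RingHom.mem_ker, hφ0]
      · simp only [SetLike.mem_coe, RingHom.mem_ker, RingHom.comp_apply, map_add,
          map_mul, map_pow, hφ0, hφ1, map_zero, mul_zero, zero_mul, add_zero]
        rw [← map_pow, Ideal.Quotient.eq_zero_iff_mem]
        exact Ideal.subset_span rfl
    exact this ha
  let f : RB' →+* Polynomial ℤ ⧸ J :=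
    Ideal.Quotient.lift I ((Ideal.Quotient.mk J).comp φ) hgen
  have h2 := congrArg f h
  have hf : ∀ p : MvPolynomial (Fin 2) ℤ,
      f (Ideal.Quotient.mk I p) = Ideal.Quotient.mk J (φ p) :=
    fun p => rfl
  erw [map_pow, map_zero, hf] at h2
  have hφp : φ (C α * X 0 + C β * X 1) = Polynomial.C β * Polynomial.X := by
    simp [map_add, map_mul, hφ0, hφ1, φ]
  rw [hφp, ← map_pow, Ideal.Quotient.eq_zero_iff_mem, hJ,
    Ideal.mem_span_singleton] at h2
  -- h2 : X^4 ∣ (C β * X)^3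
  by_contra hb
  have hb3 : (β : ℤ) ^ 3 ≠ 0 := pow_ne_zero _ hb
  have hne : (Polynomial.C β * Polynomial.X : Polynomial ℤ) ^ 3 ≠ 0 := by
    simpa [mul_pow, ← Polynomial.C_pow] using hb
  have hdeg := Polynomial.natDegree_le_of_dvd h2 hne
  rw [Polynomial.natDegree_X_pow, mul_pow, ← Polynomial.C_pow,
    Polynomial.natDegree_C_mul hb3, Polynomial.natDegree_X_pow] at hdeg
  omega
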